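/- Let X be a group that is residually a finite π-group, let x ∈ X, and let y ∈ X satisfy y^q ∈ ⟨x⟩ for some π'-number q. Then the subgroup ⟨x, y⟩ is cyclic. -/

import Mathlib

open Pointwise

def IsPiNumber (π : Set ℕ) (n : ℕ) : Prop := n ≠ 0 ∧ ∀ p : ℕ, p.Prime → p ∣ n → p ∈ π

def IsPiPrimeNumber (π : Set ℕ) (n : ℕ) : Prop := n ≠ 0 ∧ ∀ p : ℕ, p.Prime → p ∣ n → p ∉ π

/-- `N` is a normal subgroup of finite π-index, i.e. `N ∈ Ω_π(X)`. -/
def InOmega (π : Set ℕ) {X : Type*} [Group X] (N : Subgroup X) : Prop :=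
  N.Normal ∧ IsPiNumber π N.index

/-- `Y` is separable by the family `F` of subgroups. -/
def SepBy {X : Type*} [Group X] (F : Set (Subgroup X)) (Y : Subgroup X) : Prop :=
  (⋂ N ∈ F, (Y : Set X) * (N : Set X)) = (Y : Set X)

/-- `Y` is 𝓕_π-separable in `X`. -/
def SepIn (π : Set ℕ) {X : Type*} [Group X] (Y : Subgroup X) : Prop :=
  SepBy {N : Subgroup X | InOmega π N} Y

/-- `Y` is π'-isolated in `X`. -/
def Isolated (π : Set ℕ) {X : Type*} [Group X] (Y : Subgroup X) : Prop :=
  ∀ x : X, ∀ q : ℕ, IsPiPrimeNumber π q → x ^ q ∈ Y → x ∈ Y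

/-- `X` is residually a finite π-group. -/
def ResiduallyPi (π : Set ℕ) (X : Type*) [Group X] : Prop :=
  ∀ x : X, x ≠ 1 → ∃ N : Subgroup X, InOmega π N ∧ x ∉ N

/-- A π'-number is coprime to every π-number. -/
lemma aux_pi_coprime {π : Set ℕ} {q n : ℕ} (hq : IsPiPrimeNumber π q) (hn : IsPiNumber π n) :
    Nat.Coprime q n := by
  by_contra h
  obtain ⟨p, hp, hpd⟩ := Nat.exists_prime_and_dvd h
  exact hq.2 p hp (hpd.trans (Nat.gcd_dvd_left _ _)) (hn.2 p hp (hpd.trans (Nat.gcd_dvd_right _ _)))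

/-- A residually-finite-π group has no π'-torsion. -/
lemma aux_no_torsion {π : Set ℕ} {X : Type*} [Group X] (hres : ResiduallyPi π X)
    {t : X} {n : ℕ} (hn : IsPiPrimeNumber π n) (ht : t ^ n = 1) : t = 1 := by
  by_contra h
  obtain ⟨N, ⟨hnorm, hidx⟩, htN⟩ := hres t h
  haveI := hnorm
  haveI : Finite (X ⧸ N) := Nat.finite_of_card_ne_zero (by
    rw [← Subgroup.index]; exact hidx.1)
  set t' : X ⧸ N := QuotientGroup.mk t with ht'
  have h1 : t' ^ n = 1 := by rw [ht', ← QuotientGroup.mk_pow, ht]; rfl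
  have h2 : orderOf t' ∣ n := orderOf_dvd_of_pow_eq_one h1
  have h3 : orderOf t' ∣ N.index := by rw [Subgroup.index]; exact orderOf_dvd_natCard t'
  have : orderOf t' = 1 := Nat.eq_one_of_dvd_coprimes (aux_pi_coprime hn hidx) h2 h3
  have : t' = 1 := orderOf_eq_one_iff.mp this
  exact htN ((QuotientGroup.eq_one_iff t).mp this)

/-- If `y ^ q ∈ ⟨x⟩` for a π'-number `q`, then `x` and `y` commute. -/
lemma aux_commute_of_root {π : Set ℕ} {X : Type*} [Group X] (hres : ResiduallyPi π X)
    {x y : X} {q : ℕ} (hq : IsPiPrimeNumber π q)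
    {k : ℤ} (hk : x ^ k = y ^ q) : Commute x y := by
  rw [← commutatorElement_eq_one_iff_commute]
  by_contra h
  obtain ⟨N, ⟨hnorm, hidx⟩, hcN⟩ := hres _ h
  haveI := hnorm
  apply hcN
  have hcard : Nat.card (X ⧸ N) = N.index := rfl
  haveI : Finite (X ⧸ N) := Nat.finite_of_card_ne_zero (by rw [hcard]; exact hidx.1)
  set φ := QuotientGroup.mk' N with hφ
  have key : φ y ∈ Subgroup.zpowers (φ x) := by
    have hbez := Nat.gcd_eq_gcd_ab q N.index
    rw [aux_pi_coprime hq hidx] at hbez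
    have h1 : φ y
        = (φ y) ^ ((q : ℤ) * Nat.gcdA q N.index + (N.index : ℤ) * Nat.gcdB q N.index) := by
      rw [← hbez]; simp
    have h2 : (φ y) ^ (q : ℤ) = (φ x) ^ k := by
      rw [zpow_natCast, ← map_pow, ← hk, map_zpow]
    have h3 : (φ y) ^ (N.index : ℤ) = 1 := by
      rw [zpow_natCast, ← hcard, pow_card_eq_one']
    rw [zpow_add, zpow_mul, zpow_mul, h2, h3, one_zpow, mul_one, ← zpow_mul] at h1
    exact ⟨k * Nat.gcdA q N.index, h1.symm⟩
  obtain ⟨m, hm⟩ := key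
  have hcomm : Commute (φ x) (φ y) := hm ▸ (Commute.refl (φ x)).zpow_right m
  have : φ (@Bracket.bracket X X commutatorElement x y) = 1 := by
    rw [map_commutatorElement, commutatorElement_eq_one_iff_commute]
    exact hcomm
  exact (QuotientGroup.eq_one_iff _).mp this

/-- The common-generator construction: if `x` and `y` commute, `x ^ k = y ^ q`, and
π'-roots are unique, then `x` and `y` are powers of a common element `z ∈ ⟨x, y⟩`. -/
lemma aux_common_generator {X : Type*} [Group X] (x y : X) (q : ℕ) (hq0 : q ≠ 0) (k : ℤ)
    (hk : x ^ k = y ^ q) (hc : Commute x y)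
    (uniq : ∀ t : X, ∀ g : ℕ, g ≠ 0 → g ∣ q → t ^ g = 1 → t = 1) :
    ∃ z : X, x ∈ Subgroup.zpowers z ∧ y ∈ Subgroup.zpowers z ∧
      z ∈ Subgroup.closure ({x, y} : Set X) := by
  set g := Nat.gcd q k.natAbs with hg
  have hg0 : g ≠ 0 := fun h => hq0 (Nat.eq_zero_of_gcd_eq_zero_left (hg ▸ h))
  have hgq : g ∣ q := Nat.gcd_dvd_left _ _
  obtain ⟨q', hq'⟩ := hgq
  obtain ⟨k', hk'⟩ : (g : ℤ) ∣ k :=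
    (Int.natCast_dvd_natCast.mpr (Nat.gcd_dvd_right q k.natAbs)).trans
      (Int.natAbs_dvd.mpr dvd_rfl)
  -- coprimality of q' and k'
  have hcop : Nat.Coprime q' k'.natAbs := by
    have h1 : k.natAbs = g * k'.natAbs := by
      rw [hk', Int.natAbs_mul, Int.natAbs_natCast]
    have h2 : Nat.gcd (g * q') (g * k'.natAbs) = g := by
      rw [← hq', ← h1, hg]
    rw [Nat.gcd_mul_left] at h2
    exact Nat.eq_of_mul_eq_mul_left (Nat.pos_of_ne_zero hg0) (h2.trans (mul_one g).symm)
  have hicop : Int.gcd (q' : ℤ) k' = 1 := by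
    rw [Int.gcd]; simpa using hcop
  -- step A : y ^ q' = x ^ k'
  have hstepA : y ^ (q' : ℤ) = x ^ k' := by
    have hcom : Commute (x ^ k') ((y ^ (q' : ℤ))⁻¹) := ((hc.zpow_zpow k' (q' : ℤ))).inv_right
    have hw : (x ^ k' * (y ^ (q' : ℤ))⁻¹) ^ g = 1 := by
      rw [hcom.mul_pow, ← zpow_natCast (x ^ k'), ← zpow_mul, inv_pow,
        ← zpow_natCast (y ^ (q' : ℤ)), ← zpow_mul]
      rw [show k' * (g : ℤ) = k by rw [hk']; ring,
        show (q' : ℤ) * (g : ℤ) = (q : ℤ) by rw [hq']; push_cast; ring]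
      rw [zpow_natCast, hk, mul_inv_eq_one]
    have := uniq _ g hg0 ⟨q', hq'⟩ hw
    rw [mul_inv_eq_one] at this
    exact this.symm
  -- Bezout
  have hbez := Int.gcd_eq_gcd_ab (q' : ℤ) k'
  rw [hicop] at hbez
  set a := Int.gcdA (q' : ℤ) k' with ha
  set b := Int.gcdB (q' : ℤ) k' with hb
  refine ⟨y ^ b * x ^ a, ?_, ?_, ?_⟩
  · -- x = z ^ q'
    refine ⟨(q' : ℤ), ?_⟩
    show (y ^ b * x ^ a) ^ (q' : ℤ) = x
    have hcom : Commute (y ^ b) (x ^ a) := (hc.symm.zpow_zpow b a)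
    have e1 : (y ^ b) ^ (q' : ℤ) = x ^ (k' * b) := by
      rw [← zpow_mul, mul_comm, zpow_mul, hstepA, ← zpow_mul]
    have e2 : (x ^ a) ^ (q' : ℤ) = x ^ (a * (q' : ℤ)) := (zpow_mul x a _).symm
    calc (y ^ b * x ^ a) ^ (q' : ℤ)
        = x ^ (k' * b) * x ^ (a * (q' : ℤ)) := by rw [hcom.mul_zpow, e1, e2]
      _ = x ^ (k' * b + a * (q' : ℤ)) := (zpow_add x _ _).symm
      _ = x := by
          rw [show k' * b + a * (q' : ℤ) = 1 from by push_cast at hbez; linarith, zpow_one]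
  · -- y = z ^ k'
    refine ⟨k', ?_⟩
    show (y ^ b * x ^ a) ^ k' = y
    have hcom : Commute (y ^ b) (x ^ a) := (hc.symm.zpow_zpow b a)
    have f1 : (x ^ a) ^ k' = y ^ ((q' : ℤ) * a) := by
      rw [← zpow_mul, mul_comm, zpow_mul, ← hstepA, ← zpow_mul]
    have f2 : (y ^ b) ^ k' = y ^ (b * k') := (zpow_mul y b k').symm
    calc (y ^ b * x ^ a) ^ k'
        = y ^ (b * k') * y ^ ((q' : ℤ) * a) := by rw [hcom.mul_zpow, f1, f2]
      _ = y ^ (b * k' + (q' : ℤ) * a) := (zpow_add y _ _).symm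
      _ = y := by
          rw [show b * k' + (q' : ℤ) * a = 1 from by push_cast at hbez; linarith, zpow_one]
  · exact Subgroup.mul_mem _
      (Subgroup.zpow_mem _ (Subgroup.subset_closure (by simp)) b)
      (Subgroup.zpow_mem _ (Subgroup.subset_closure (by simp)) a)

/-- If `X` is residually a finite π-group and `y ^ q ∈ ⟨x⟩` for a π'-number `q`,
then `⟨x, y⟩` is cyclic. -/
theorem cyclic_of_piPrime_root (π : Set ℕ) {X : Type*} [Group X]
    (hres : ResiduallyPi π X) (x y : X) (q : ℕ) (hq : IsPiPrimeNumber π q)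
    (hy : y ^ q ∈ Subgroup.zpowers x) :
    IsCyclic ↥(Subgroup.closure ({x, y} : Set X)) := by
  obtain ⟨k, hk⟩ := Subgroup.mem_zpowers_iff.mp hy
  have hc : Commute x y := aux_commute_of_root hres hq hk
  have uniq : ∀ t : X, ∀ g : ℕ, g ≠ 0 → g ∣ q → t ^ g = 1 → t = 1 := fun t g hg0 hgq ht =>
    aux_no_torsion hres ⟨hg0, fun p hp hpd => hq.2 p hp (hpd.trans hgq)⟩ ht
  obtain ⟨z, hxz, hyz, hzc⟩ := aux_common_generator x y q hq.1 k hk hc uniq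
  have heq : Subgroup.closure ({x, y} : Set X) = Subgroup.zpowers z := by
    apply le_antisymm
    · rw [Subgroup.closure_le]
      rintro w (rfl | rfl)
      · exact hxz
      · exact hyz
    · exact (Subgroup.zpowers_le).mpr hzc
  rw [heq]
  exact ⟨⟨⟨z, Subgroup.mem_zpowers z⟩, fun w => by
    obtain ⟨n, hn⟩ := w.2
    exact ⟨n, Subtype.ext (by simpa [SubgroupClass.coe_zpow] using hn)⟩⟩⟩
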